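/- arXiv:1812.06132 — 2 statements merged into one kernel-verified Lean document; each statement's English description precedes it below -/
import Mathlib

section
/- Approximate complementary slackness (from the proof of Theorem 3): let h : ℝ^{n_x} × ℝ^{n_u} → ℝ^{n_h} be Lipschitz with constant L_h, let x : [0,1] → ℝ^{n_x}, u : [0,1] → ℝ^{n_u}, μ : [0,1] → ℝ^{n_h} be continuous with μ(t)ᵀ h(x(t), u(t)) = 0 for all t ∈ [0,1], let h_max bound ‖h(x_N(t), u_N(t))‖ uniformly in t and N where x_N = B_N x, u_N = B_N u, and let μ_max bound ‖μ(t)‖ on [0,1]. Define μ_N(t) = (1/(N+1)) Σ_{j=0}^N μ(j/N) b_{j,N}(t). Then for every N ≥ 1 and every node t_k = k/N, |μ_N(t_k)ᵀ h(x_N(t_k), u_N(t_k))| ≤ (1/(N+1)) · [ h_max · (5 n_h/4) · W_μ(N^{−1/2}) + μ_max · L_h · ( (5 n_x/4) W_x(N^{−1/2}) + (5 n_u/4) W_u(N^{−1/2}) ) ]. -/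
open scoped BigOperators

/-- The Bernstein basis polynomial `b_{j,N}(t) = C(N,j) t^j (1-t)^(N-j)`. -/
noncomputable def bern (N j : ℕ) (t : ℝ) : ℝ :=
  (N.choose j : ℝ) * t ^ j * (1 - t) ^ (N - j)

/-- The modulus of continuity on `[0,1]` of a function `g`. -/
noncomputable def modCont {E : Type*} [NormedAddCommGroup E] (g : ℝ → E) (δ : ℝ) : ℝ :=
  sSup {d : ℝ | ∃ s t : ℝ, s ∈ Set.Icc (0:ℝ) 1 ∧ t ∈ Set.Icc (0:ℝ) 1 ∧
    |s - t| ≤ δ ∧ d = ‖g s - g t‖}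

/-- The `N`-th Bernstein approximation of `g : [0,1] → E`. -/
noncomputable def bapprox {E : Type*} [AddCommMonoid E] [Module ℝ E]
    (N : ℕ) (g : ℝ → E) (t : ℝ) : E :=
  ∑ j : Fin (N + 1), bern N (j : ℕ) t • g (((j : ℕ) : ℝ) / (N : ℝ))

/-!
Auxiliary lemmas
-/
open scoped RealInnerProductSpace

lemma bern_eq_eval (N j : ℕ) (t : ℝ) :
    bern N j t = (bernsteinPolynomial ℝ N j).eval t := by
  simp [bern, bernsteinPolynomial]

lemma bern_nonneg {N j : ℕ} {t : ℝ} (h0 : 0 ≤ t) (h1 : t ≤ 1) : 0 ≤ bern N j t := by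
  have h2 : (0:ℝ) ≤ 1 - t := by linarith
  have := (N.choose j).cast_nonneg (α := ℝ)
  unfold bern; positivity

lemma bern_sum (N : ℕ) (t : ℝ) : ∑ j : Fin (N + 1), bern N (j : ℕ) t = 1 := by
  rw [Fin.sum_univ_eq_sum_range (fun j => bern N j t)]
  have := bernsteinPolynomial.sum ℝ N
  have h2 := congrArg (Polynomial.eval t) this
  simpa [Polynomial.eval_finset_sum, bern_eq_eval] using h2

lemma bern_variance (N : ℕ) (hN : 1 ≤ N) (t : ℝ) :
    ∑ j : Fin (N + 1), ((j : ℝ) / (N : ℝ) - t) ^ 2 * bern N (j : ℕ) t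
      = t * (1 - t) / N := by
  have hNpos : (0:ℝ) < N := by exact_mod_cast hN
  have := bernsteinPolynomial.variance ℝ N
  have h2 := congrArg (Polynomial.eval t) this
  simp only [Polynomial.eval_finset_sum, Polynomial.eval_mul, Polynomial.eval_pow,
    Polynomial.eval_sub, Polynomial.eval_natCast, Polynomial.eval_smul,
    Polynomial.eval_X, Polynomial.eval_one, smul_eq_mul] at h2
  rw [Fin.sum_univ_eq_sum_range (fun j => ((j:ℝ)/(N:ℝ) - t)^2 * bern N j t)]
  have key : ∀ j : ℕ, ((j:ℝ)/(N:ℝ) - t)^2 * bern N j t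
      = ((N:ℝ) * t - j)^2 * (bernsteinPolynomial ℝ N j).eval t / (N:ℝ)^2 := by
    intro j
    rw [← bern_eq_eval]
    have hN2 : (N:ℝ)^2 ≠ 0 := by positivity
    field_simp
    ring
  rw [Finset.sum_congr rfl (fun j _ => key j), ← Finset.sum_div]
  simp only [nsmul_eq_mul] at h2
  rw [h2]
  field_simp


section modContLemmas
variable {E : Type*} [NormedAddCommGroup E] {g : ℝ → E} {δ : ℝ}

lemma modCont_bddAbove (hg : ContinuousOn g (Set.Icc (0:ℝ) 1)) :
    BddAbove {d : ℝ | ∃ s t : ℝ, s ∈ Set.Icc (0:ℝ) 1 ∧ t ∈ Set.Icc (0:ℝ) 1 ∧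
      |s - t| ≤ δ ∧ d = ‖g s - g t‖} := by
  obtain ⟨M, hM⟩ := (isCompact_Icc).exists_bound_of_continuousOn hg
  refine ⟨2 * M, ?_⟩
  rintro d ⟨s, t, hs, ht, -, rfl⟩
  calc ‖g s - g t‖ ≤ ‖g s‖ + ‖g t‖ := norm_sub_le _ _
    _ ≤ 2 * M := by have := hM s hs; have := hM t ht; linarith

lemma modCont_nonneg (hg : ContinuousOn g (Set.Icc (0:ℝ) 1)) (hδ : 0 ≤ δ) :
    0 ≤ modCont g δ := by
  have : (0:ℝ) ∈ {d : ℝ | ∃ s t : ℝ, s ∈ Set.Icc (0:ℝ) 1 ∧ t ∈ Set.Icc (0:ℝ) 1 ∧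
      |s - t| ≤ δ ∧ d = ‖g s - g t‖} :=
    ⟨0, 0, Set.left_mem_Icc.2 zero_le_one, Set.left_mem_Icc.2 zero_le_one,
      by simpa using hδ, by simp⟩
  exact le_csSup (modCont_bddAbove hg) this

lemma norm_sub_le_modCont (hg : ContinuousOn g (Set.Icc (0:ℝ) 1))
    {s t : ℝ} (hs : s ∈ Set.Icc (0:ℝ) 1) (ht : t ∈ Set.Icc (0:ℝ) 1)
    (hst : |s - t| ≤ δ) : ‖g s - g t‖ ≤ modCont g δ :=
  le_csSup (modCont_bddAbove hg) ⟨s, t, hs, ht, hst, rfl⟩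

lemma norm_sub_le_modCont_chain (hg : ContinuousOn g (Set.Icc (0:ℝ) 1))
    (hδ : 0 < δ) {s t : ℝ} (hs : s ∈ Set.Icc (0:ℝ) 1) (ht : t ∈ Set.Icc (0:ℝ) 1) :
    ‖g s - g t‖ ≤ (1 + ((s - t) / δ) ^ 2) * modCont g δ := by
  set lam : ℝ := |s - t| / δ with hlam
  have hlam0 : 0 ≤ lam := div_nonneg (abs_nonneg _) hδ.le
  set k : ℕ := ⌈lam⌉₊ with hk
  -- step 1 : ‖g s - g t‖ ≤ k * modCont g δ
  have step1 : ‖g s - g t‖ ≤ (k : ℝ) * modCont g δ := by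
    rcases eq_or_ne s t with rfl | hne
    · simpa using mul_nonneg (Nat.cast_nonneg k) (modCont_nonneg hg hδ.le)
    · have hlampos : 0 < lam := by
        have : 0 < |s - t| := abs_pos.2 (sub_ne_zero.2 hne)
        exact div_pos this hδ
      have hkpos : 0 < k := Nat.ceil_pos.2 hlampos
      have hle : |s - t| ≤ k * δ := by
        have := Nat.le_ceil lam
        rw [hlam, div_le_iff₀ hδ] at this
        linarith [this]
      -- telescoping
      set p : ℕ → ℝ := fun i => t + (i : ℝ) / k * (s - t) with hp
      have hmem : ∀ i : ℕ, i ≤ k → p i ∈ Set.Icc (0:ℝ) 1 := by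
        intro i hi
        have h0 : (0:ℝ) ≤ (i:ℝ)/k := by positivity
        have h1 : (i:ℝ)/k ≤ 1 := by
          rw [div_le_one (by exact_mod_cast hkpos)]; exact_mod_cast hi
        have : p i = (1 - (i:ℝ)/k) * t + ((i:ℝ)/k) * s := by rw [hp]; ring
        rw [this]
        constructor
        · have := hs.1; have := ht.1; nlinarith [hs.1, ht.1]
        · nlinarith [hs.2, ht.2]
      have htel : g s - g t = ∑ i : Fin k, (g (p (i + 1)) - g (p i)) := by
        rw [Fin.sum_univ_eq_sum_range (fun i => g (p (i+1)) - g (p i)),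
          Finset.sum_range_sub (fun i => g (p i))]
        have h0 : p 0 = t := by simp [hp]
        have hk' : p k = s := by
          rw [hp]; field_simp; ring
        rw [h0, hk']
      rw [htel]
      calc ‖∑ i : Fin k, (g (p (i + 1)) - g (p i))‖
          ≤ ∑ i : Fin k, ‖g (p (i + 1)) - g (p i)‖ := norm_sum_le _ _
        _ ≤ ∑ _i : Fin k, modCont g δ := by
            refine Finset.sum_le_sum fun i _ => ?_
            refine norm_sub_le_modCont hg (hmem _ (by omega)) (hmem _ (by omega)) ?_
            have : p ((i:ℕ) + 1) - p (i:ℕ) = (s - t) / k := by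
              rw [hp]; push_cast; field_simp; ring
            rw [this, abs_div, abs_of_nonneg (by positivity : (0:ℝ) ≤ (k:ℝ))]
            rw [div_le_iff₀ (by exact_mod_cast hkpos)]
            calc |s - t| ≤ k * δ := hle
              _ = δ * k := mul_comm _ _
        _ = (k : ℝ) * modCont g δ := by simp [mul_comm]
  -- step 2 : (k:ℝ) ≤ 1 + lam^2
  have step2 : (k : ℝ) ≤ 1 + lam ^ 2 := by
    rcases le_or_gt lam 1 with hl | hl
    · have : k ≤ 1 := Nat.ceil_le.2 (by simpa using hl)
      have : (k:ℝ) ≤ 1 := by exact_mod_cast this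
      nlinarith
    · have : (k:ℝ) < lam + 1 := Nat.ceil_lt_add_one hlam0
      nlinarith
  have hsq : ((s - t) / δ) ^ 2 = lam ^ 2 := by
    rw [hlam, div_pow, div_pow, sq_abs]
  rw [hsq]
  calc ‖g s - g t‖ ≤ (k : ℝ) * modCont g δ := step1
    _ ≤ (1 + lam ^ 2) * modCont g δ :=
        mul_le_mul_of_nonneg_right step2 (modCont_nonneg hg hδ.le)

end modContLemmas


lemma scalar_bern_bound {N : ℕ} (hN : 1 ≤ N) (f : ℝ → ℝ) (W : ℝ) (hW : 0 ≤ W)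
    (hf : ∀ s ∈ Set.Icc (0:ℝ) 1, ∀ t ∈ Set.Icc (0:ℝ) 1,
      |f s - f t| ≤ (1 + (N : ℝ) * (s - t) ^ 2) * W)
    {t : ℝ} (ht : t ∈ Set.Icc (0:ℝ) 1) :
    |∑ j : Fin (N + 1), bern N (j : ℕ) t * f (((j : ℕ) : ℝ) / (N : ℝ)) - f t|
      ≤ (5 / 4) * W := by
  have hNpos : (0:ℝ) < N := by exact_mod_cast hN
  have hnode : ∀ j : Fin (N + 1), ((j : ℕ) : ℝ) / (N : ℝ) ∈ Set.Icc (0:ℝ) 1 := by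
    intro j
    constructor
    · positivity
    · rw [div_le_one hNpos]
      exact_mod_cast Nat.lt_succ_iff.1 j.2
  have key : ∑ j : Fin (N + 1), bern N (j : ℕ) t *
      (f (((j : ℕ) : ℝ) / (N : ℝ)) - f t)
      = ∑ j : Fin (N + 1), bern N (j : ℕ) t * f (((j : ℕ) : ℝ) / (N : ℝ)) - f t := by
    simp only [mul_sub]
    rw [Finset.sum_sub_distrib, ← Finset.sum_mul, bern_sum, one_mul]
  calc |∑ j : Fin (N + 1), bern N (j : ℕ) t * f (((j : ℕ) : ℝ) / (N : ℝ)) - f t|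
      = |∑ j : Fin (N + 1), bern N (j : ℕ) t *
          (f (((j : ℕ) : ℝ) / (N : ℝ)) - f t)| := by rw [key]
    _ ≤ ∑ j : Fin (N + 1), |bern N (j : ℕ) t *
          (f (((j : ℕ) : ℝ) / (N : ℝ)) - f t)| := Finset.abs_sum_le_sum_abs _ _
    _ ≤ ∑ j : Fin (N + 1), bern N (j : ℕ) t *
          ((1 + (N : ℝ) * (((j : ℕ) : ℝ) / (N : ℝ) - t) ^ 2) * W) := by
        refine Finset.sum_le_sum fun j _ => ?_
        rw [abs_mul, abs_of_nonneg (bern_nonneg ht.1 ht.2)]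
        exact mul_le_mul_of_nonneg_left (hf _ (hnode j) _ ht) (bern_nonneg ht.1 ht.2)
    _ = (1 + (N : ℝ) * (t * (1 - t) / N)) * W := by
        have expand : ∀ j : Fin (N + 1), bern N (j : ℕ) t *
            ((1 + (N : ℝ) * (((j : ℕ) : ℝ) / (N : ℝ) - t) ^ 2) * W)
            = bern N (j : ℕ) t * W
              + (N : ℝ) * W * ((((j : ℕ) : ℝ) / (N : ℝ) - t) ^ 2 * bern N (j : ℕ) t) :=
          fun j => by ring
        rw [Finset.sum_congr rfl (fun j _ => expand j), Finset.sum_add_distrib,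
          ← Finset.sum_mul, bern_sum, ← Finset.mul_sum, bern_variance N hN t]
        ring
    _ ≤ (5 / 4) * W := by
        have h1 : t * (1 - t) ≤ 1 / 4 := by nlinarith [sq_nonneg (t - 1/2)]
        have h2 : (N:ℝ) * (t * (1 - t) / N) = t * (1 - t) := by field_simp
        rw [h2]
        nlinarith

lemma euclid_coord_le_norm {n : ℕ} (v : EuclideanSpace ℝ (Fin n)) (i : Fin n) :
    |v i| ≤ ‖v‖ := by
  rw [EuclideanSpace.norm_eq]
  have h1 : |v i| = Real.sqrt (‖v i‖ ^ 2) := by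
    rw [Real.sqrt_sq_eq_abs]; simp
  rw [h1]
  apply Real.sqrt_le_sqrt
  exact Finset.single_le_sum (f := fun j => ‖v j‖ ^ 2) (fun j _ => by positivity)
    (Finset.mem_univ i)

lemma euclid_norm_le_sum_abs {n : ℕ} (v : EuclideanSpace ℝ (Fin n)) :
    ‖v‖ ≤ ∑ i, |v i| := by
  rw [EuclideanSpace.norm_eq]
  have h1 : ∑ i, ‖v i‖ ^ 2 ≤ (∑ i, ‖v i‖) ^ 2 :=
    Finset.sum_sq_le_sq_sum_of_nonneg (fun i _ => norm_nonneg _)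
  calc Real.sqrt (∑ i, ‖v i‖ ^ 2) ≤ Real.sqrt ((∑ i, ‖v i‖) ^ 2) := Real.sqrt_le_sqrt h1
    _ = ∑ i, ‖v i‖ := by
        rw [Real.sqrt_sq (Finset.sum_nonneg fun i _ => norm_nonneg _)]
    _ = ∑ i, |v i| := by simp [Real.norm_eq_abs]

lemma bapprox_coord {n N : ℕ} (g : ℝ → EuclideanSpace ℝ (Fin n)) (t : ℝ) (i : Fin n) :
    (bapprox N g t) i
      = ∑ j : Fin (N + 1), bern N (j : ℕ) t * g (((j : ℕ) : ℝ) / (N : ℝ)) i := by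
  rw [bapprox]
  rw [show (∑ j : Fin (N + 1), bern N (j : ℕ) t • g (((j : ℕ) : ℝ) / (N : ℝ))) i
    = ∑ j : Fin (N + 1), (bern N (j : ℕ) t • g (((j : ℕ) : ℝ) / (N : ℝ))) i from
    by rw [WithLp.ofLp_sum, Finset.sum_apply]]
  simp [PiLp.smul_apply, smul_eq_mul]

lemma bapprox_sub_norm_le {n N : ℕ} (hN : 1 ≤ N) (g : ℝ → EuclideanSpace ℝ (Fin n))
    (hg : ContinuousOn g (Set.Icc (0:ℝ) 1)) {t : ℝ} (ht : t ∈ Set.Icc (0:ℝ) 1) :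
    ‖bapprox N g t - g t‖ ≤ 5 * (n : ℝ) / 4 * modCont g ((N : ℝ) ^ (-(1/2 : ℝ))) := by
  set δ : ℝ := (N : ℝ) ^ (-(1/2 : ℝ)) with hδdef
  have hNpos : (0:ℝ) < N := by exact_mod_cast hN
  have hδpos : 0 < δ := Real.rpow_pos_of_pos hNpos _
  have hδsq : δ ^ 2 = (N : ℝ)⁻¹ := by
    rw [hδdef, ← Real.rpow_natCast ((N:ℝ) ^ (-(1/2:ℝ))) 2, ← Real.rpow_mul hNpos.le]
    rw [show ((-(1/2:ℝ)) * (2:ℕ)) = -1 by norm_num, Real.rpow_neg_one]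
  set W : ℝ := modCont g δ with hWdef
  have hW : 0 ≤ W := modCont_nonneg hg hδpos.le
  have hcoord : ∀ i : Fin n, |(bapprox N g t - g t) i| ≤ (5 / 4) * W := by
    intro i
    have happ : (bapprox N g t - g t) i
        = (∑ j : Fin (N + 1), bern N (j : ℕ) t * g (((j : ℕ) : ℝ) / (N : ℝ)) i)
          - g t i := by
      rw [PiLp.sub_apply, bapprox_coord]
    rw [happ]
    refine scalar_bern_bound hN (fun s => g s i) W hW ?_ ht
    intro s hs r hr
    have h1 : |g s i - g r i| ≤ ‖g s - g r‖ := by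
      have := euclid_coord_le_norm (g s - g r) i
      simpa [PiLp.sub_apply] using this
    have h2 : ‖g s - g r‖ ≤ (1 + ((s - r) / δ) ^ 2) * W :=
      norm_sub_le_modCont_chain hg hδpos hs hr
    have h3 : ((s - r) / δ) ^ 2 = (N : ℝ) * (s - r) ^ 2 := by
      rw [div_pow, hδsq]
      field_simp
    rw [h3] at h2
    exact h1.trans h2
  calc ‖bapprox N g t - g t‖ ≤ ∑ i, |(bapprox N g t - g t) i| :=
        euclid_norm_le_sum_abs _
    _ ≤ ∑ _i : Fin n, (5 / 4) * W := Finset.sum_le_sum fun i _ => hcoord i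
    _ = 5 * (n : ℝ) / 4 * W := by
        rw [Finset.sum_const, Finset.card_univ, Fintype.card_fin, nsmul_eq_mul]
        ring

lemma abs_sum_mul_le_norm {n : ℕ} (a b : EuclideanSpace ℝ (Fin n)) :
    |∑ i, a i * b i| ≤ ‖a‖ * ‖b‖ := by
  have hab : ∑ i, a i * b i = inner ℝ a b := by
    rw [PiLp.inner_apply]
    simp [RCLike.inner_apply']
    exact Finset.sum_congr rfl fun _ _ => mul_comm _ _
  rw [hab]
  exact abs_real_inner_le_norm a b

/-- approximate complementary slackness, from the proof of Theorem 3: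
with `μ_N(t) = (1/(N+1)) Σ_j μ(j/N) b_{j,N}(t)`, at every node `t_k = k/N` one has
`|μ_N(t_k)ᵀ h(x_N(t_k), u_N(t_k))| ≤ (1/(N+1)) · [h_max·(5n_h/4)·W_μ(N^{-1/2})
  + μ_max·L_h·((5n_x/4)·W_x(N^{-1/2}) + (5n_u/4)·W_u(N^{-1/2}))]`. -/
theorem approximate_complementary_slackness (nx nu nh : ℕ)
    (h : EuclideanSpace ℝ (Fin nx) × EuclideanSpace ℝ (Fin nu) → EuclideanSpace ℝ (Fin nh))
    (Lh : NNReal) (hLh : LipschitzWith Lh h)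
    (x : ℝ → EuclideanSpace ℝ (Fin nx)) (u : ℝ → EuclideanSpace ℝ (Fin nu))
    (μ : ℝ → EuclideanSpace ℝ (Fin nh))
    (hx : ContinuousOn x (Set.Icc (0:ℝ) 1)) (hu : ContinuousOn u (Set.Icc (0:ℝ) 1))
    (hμ : ContinuousOn μ (Set.Icc (0:ℝ) 1))
    (hcs : ∀ t ∈ Set.Icc (0:ℝ) 1, (∑ i, μ t i * h (x t, u t) i) = 0)
    (hmax : ℝ)
    (hhmax : ∀ N : ℕ, 1 ≤ N → ∀ t ∈ Set.Icc (0:ℝ) 1,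
      ‖h (bapprox N x t, bapprox N u t)‖ ≤ hmax)
    (μmax : ℝ) (hμmax : ∀ t ∈ Set.Icc (0:ℝ) 1, ‖μ t‖ ≤ μmax) :
    ∀ N : ℕ, 1 ≤ N → ∀ k : ℕ, k ≤ N →
      |∑ i, (((N : ℝ) + 1)⁻¹ • bapprox N μ ((k : ℝ) / (N : ℝ))) i *
          h (bapprox N x ((k : ℝ) / (N : ℝ)), bapprox N u ((k : ℝ) / (N : ℝ))) i|
        ≤ ((N : ℝ) + 1)⁻¹ *
          (hmax * (5 * (nh : ℝ) / 4) * modCont μ ((N : ℝ) ^ (-(1/2 : ℝ)))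
            + μmax * (Lh : ℝ) *
              ((5 * (nx : ℝ) / 4) * modCont x ((N : ℝ) ^ (-(1/2 : ℝ)))
                + (5 * (nu : ℝ) / 4) * modCont u ((N : ℝ) ^ (-(1/2 : ℝ))))) := by
  intro N hN k hk
  have hNpos : (0:ℝ) < N := by exact_mod_cast hN
  set δ : ℝ := (N : ℝ) ^ (-(1/2 : ℝ)) with hδdef
  have hδpos : 0 < δ := Real.rpow_pos_of_pos hNpos _
  set t : ℝ := (k : ℝ) / (N : ℝ) with htdef
  have ht : t ∈ Set.Icc (0:ℝ) 1 := by
    constructor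
    · positivity
    · rw [htdef, div_le_one hNpos]; exact_mod_cast hk
  set H : EuclideanSpace ℝ (Fin nh) := h (bapprox N x t, bapprox N u t) with hHdef
  set B : EuclideanSpace ℝ (Fin nh) := bapprox N μ t with hBdef
  -- pull out the scalar
  have hL : ∑ i, (((N:ℝ)+1)⁻¹ • B) i * H i = ((N:ℝ)+1)⁻¹ * ∑ i, B i * H i := by
    rw [Finset.mul_sum]
    refine Finset.sum_congr rfl fun i _ => ?_
    rw [PiLp.smul_apply, smul_eq_mul]; ring
  -- split the sum
  have hsplit : ∑ i, B i * H i
      = (∑ i, (B i - μ t i) * H i)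
        + (∑ i, μ t i * (H i - h (x t, u t) i)) := by
    have h0 := hcs t ht
    have expand : ∀ i : Fin nh, B i * H i
        = (B i - μ t i) * H i + μ t i * (H i - h (x t, u t) i)
          + μ t i * h (x t, u t) i := fun i => by ring
    rw [Finset.sum_congr rfl fun i _ => expand i, Finset.sum_add_distrib,
      Finset.sum_add_distrib, h0, add_zero]
  -- bounds
  have hμnonneg : 0 ≤ μmax :=
    (norm_nonneg (μ 0)).trans (hμmax 0 ⟨le_refl _, zero_le_one⟩)
  have E1 : |∑ i, (B i - μ t i) * H i|
      ≤ hmax * (5 * (nh : ℝ) / 4) * modCont μ δ := by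
    have hBd : ‖B - μ t‖ ≤ 5 * (nh : ℝ) / 4 * modCont μ δ := by
      have hcoords : ∀ i : Fin nh, (B - μ t) i = B i - μ t i := fun i => rfl
      exact bapprox_sub_norm_le hN μ hμ ht
    have hHb : ‖H‖ ≤ hmax := hhmax N hN t ht
    have hBnn : (0:ℝ) ≤ 5 * (nh : ℝ) / 4 * modCont μ δ := by
      have := modCont_nonneg hμ hδpos.le (g := μ)
      positivity
    have step : |∑ i, (B i - μ t i) * H i| ≤ ‖B - μ t‖ * ‖H‖ := by
      have := abs_sum_mul_le_norm (B - μ t) H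
      simpa [PiLp.sub_apply] using this
    calc |∑ i, (B i - μ t i) * H i| ≤ ‖B - μ t‖ * ‖H‖ := step
      _ ≤ (5 * (nh : ℝ) / 4 * modCont μ δ) * hmax :=
          mul_le_mul hBd hHb (norm_nonneg _) hBnn
      _ = hmax * (5 * (nh : ℝ) / 4) * modCont μ δ := by ring
  have E2 : |∑ i, μ t i * (H i - h (x t, u t) i)|
      ≤ μmax * (Lh : ℝ) * ((5 * (nx : ℝ) / 4) * modCont x δ
          + (5 * (nu : ℝ) / 4) * modCont u δ) := by
    have hHd : ‖H - h (x t, u t)‖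
        ≤ (Lh : ℝ) * (‖bapprox N x t - x t‖ + ‖bapprox N u t - u t‖) := by
      rw [← dist_eq_norm, hHdef]
      refine (hLh.dist_le_mul _ _).trans ?_
      refine mul_le_mul_of_nonneg_left ?_ Lh.2
      rw [Prod.dist_eq]
      refine max_le ?_ ?_
      · rw [dist_eq_norm]
        linarith [norm_nonneg (bapprox N u t - u t)]
      · rw [dist_eq_norm]
        linarith [norm_nonneg (bapprox N x t - x t)]
    have hsum : ‖bapprox N x t - x t‖ + ‖bapprox N u t - u t‖
        ≤ (5 * (nx : ℝ) / 4) * modCont x δ + (5 * (nu : ℝ) / 4) * modCont u δ := by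
      have h1 := bapprox_sub_norm_le hN x hx ht
      have h2 := bapprox_sub_norm_le hN u hu ht
      linarith
    have step : |∑ i, μ t i * (H i - h (x t, u t) i)| ≤ ‖μ t‖ * ‖H - h (x t, u t)‖ := by
      have := abs_sum_mul_le_norm (μ t) (H - h (x t, u t))
      simpa [PiLp.sub_apply] using this
    calc |∑ i, μ t i * (H i - h (x t, u t) i)|
        ≤ ‖μ t‖ * ‖H - h (x t, u t)‖ := step
      _ ≤ μmax * ((Lh : ℝ) * (‖bapprox N x t - x t‖ + ‖bapprox N u t - u t‖)) :=
          mul_le_mul (hμmax t ht) hHd (norm_nonneg _) hμnonneg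
      _ ≤ μmax * (Lh : ℝ) * ((5 * (nx : ℝ) / 4) * modCont x δ
            + (5 * (nu : ℝ) / 4) * modCont u δ) := by
          rw [mul_assoc]
          refine mul_le_mul_of_nonneg_left ?_ hμnonneg
          exact mul_le_mul_of_nonneg_left hsum Lh.2
  have hinv : (0:ℝ) ≤ ((N:ℝ)+1)⁻¹ := by positivity
  rw [hL, abs_mul, abs_of_nonneg hinv]
  refine mul_le_mul_of_nonneg_left ?_ hinv
  calc |∑ i, B i * H i|
      ≤ |∑ i, (B i - μ t i) * H i| + |∑ i, μ t i * (H i - h (x t, u t) i)| := by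
        rw [hsplit]; exact abs_add_le _ _
    _ ≤ _ := add_le_add E1 E2
end

section
/- Appendix inequality (quadrature of a weighted gradient term): let G : ℝ^{n_x} × ℝ^{n_u} → ℝ^{n_x} be Lipschitz continuous and bounded, and let x : [0,1] → ℝ^{n_x}, u : [0,1] → ℝ^{n_u} be continuous with Bernstein approximations x_N = B_N x, u_N = B_N u. Then there exists a constant C̄ > 0, independent of N, such that for every N ≥ 1, ‖ (1/(N+1)) Σ_{j=0}^N G(x_N(j/N), u_N(j/N)) b_{0,N}(j/N) − ∫_0^1 G(x(t), u(t)) b_{0,N}(t) dt ‖ ≤ C̄ · ( N^{−1/2} + W_x(N^{−1/2}) + W_u(N^{−1/2}) ). -/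
open scoped BigOperators

lemma modCont_nonneg_s16 {E : Type*} [NormedAddCommGroup E] (g : ℝ → E) (δ : ℝ) :
    0 ≤ modCont g δ := by
  apply Real.sSup_nonneg
  rintro d ⟨s, t, _, _, _, rfl⟩
  positivity

lemma bern_zero (N : ℕ) (t : ℝ) : bern N 0 t = (1 - t) ^ N := by
  simp [bern]

lemma geom_half_le (m : ℕ) : ∑ j ∈ Finset.range m, (1/2 : ℝ) ^ j ≤ 2 := by
  have h := geom_sum_eq (by norm_num : (1/2:ℝ) ≠ 1) m
  rw [h]
  have : (0:ℝ) ≤ (1/2:ℝ)^m := by positivity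
  rw [div_le_iff_of_neg (by norm_num : (1/2:ℝ)-1 < 0)]
  linarith

lemma exp_neg_one_le_half : Real.exp (-1) ≤ 1/2 := by
  rw [Real.exp_neg]
  have h2 : (2:ℝ) ≤ Real.exp 1 := by
    have := Real.add_one_le_exp (1:ℝ); linarith
  rw [inv_le_comm₀ (by positivity) (by norm_num)]
  linarith

lemma bern_sum_le (N : ℕ) (hN : 1 ≤ N) :
    ∑ j ∈ Finset.range (N+1), bern N 0 ((j:ℝ)/(N:ℝ)) ≤ 2 := by
  have hNpos : (0:ℝ) < N := by exact_mod_cast hN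
  calc ∑ j ∈ Finset.range (N+1), bern N 0 ((j:ℝ)/(N:ℝ))
      ≤ ∑ j ∈ Finset.range (N+1), (1/2:ℝ)^j := by
        apply Finset.sum_le_sum
        intro j hj
        have hjN : (j:ℝ) ≤ N := by
          exact_mod_cast Nat.lt_succ_iff.mp (Finset.mem_range.mp hj)
        rw [bern_zero]
        have h1 : (0:ℝ) ≤ 1 - (j:ℝ)/N := by
          rw [sub_nonneg, div_le_one hNpos]; exact hjN
        have h2 : 1 - (j:ℝ)/N ≤ Real.exp (-((j:ℝ)/N)) := by
          have := Real.add_one_le_exp (-((j:ℝ)/N)); linarith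
        calc (1 - (j:ℝ)/N) ^ N ≤ Real.exp (-((j:ℝ)/N)) ^ N :=
              pow_le_pow_left₀ h1 h2 N
          _ = Real.exp (-(j:ℝ)) := by
              rw [← Real.exp_nat_mul]
              congr 1
              field_simp
          _ = Real.exp (-1) ^ j := by
              rw [← Real.exp_nat_mul]; congr 1; ring
          _ ≤ (1/2:ℝ)^j := pow_le_pow_left₀ (Real.exp_nonneg _) exp_neg_one_le_half j
    _ ≤ 2 := geom_half_le _

lemma bern_nonneg_node (N j : ℕ) (hN : 1 ≤ N) (hj : j ≤ N) :
    0 ≤ bern N 0 ((j:ℝ)/(N:ℝ)) := by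
  have hNpos : (0:ℝ) < N := by exact_mod_cast hN
  rw [bern_zero]
  have : (0:ℝ) ≤ 1 - (j:ℝ)/N := by
    rw [sub_nonneg, div_le_one hNpos]; exact_mod_cast hj
  positivity

lemma integral_one_sub_pow (N : ℕ) :
    ∫ t in (0:ℝ)..1, (1 - t)^N = 1/((N:ℝ)+1) := by
  have h := intervalIntegral.integral_comp_sub_left (fun s : ℝ => s^N) 1 (a := 0) (b := 1)
  simp only [sub_zero, sub_self] at h
  rw [h, integral_pow]
  push_cast
  norm_num

/-- Appendix inequality: quadrature error of the weighted term
`G(x_N, u_N)·b_{0,N}` against `∫ G(x,u)·b_{0,N}`. -/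
theorem appendix_weighted_quadrature (nx nu : ℕ)
    (G : EuclideanSpace ℝ (Fin nx) × EuclideanSpace ℝ (Fin nu) → EuclideanSpace ℝ (Fin nx))
    (K : NNReal) (hG : LipschitzWith K G)
    (M : ℝ) (hM : ∀ p, ‖G p‖ ≤ M)
    (x : ℝ → EuclideanSpace ℝ (Fin nx)) (u : ℝ → EuclideanSpace ℝ (Fin nu))
    (hx : ContinuousOn x (Set.Icc (0:ℝ) 1)) (hu : ContinuousOn u (Set.Icc (0:ℝ) 1)) :
    ∃ C : ℝ, 0 < C ∧ ∀ N : ℕ, 1 ≤ N →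
      ‖((N : ℝ) + 1)⁻¹ •
            (∑ j ∈ Finset.range (N + 1), bern N 0 ((j : ℝ) / (N : ℝ)) •
              G (bapprox N x ((j : ℝ) / (N : ℝ)), bapprox N u ((j : ℝ) / (N : ℝ))))
          - ∫ t in (0:ℝ)..1, bern N 0 t • G (x t, u t)‖
        ≤ C * ((N : ℝ) ^ (-(1/2 : ℝ)) + modCont x ((N : ℝ) ^ (-(1/2 : ℝ)))
            + modCont u ((N : ℝ) ^ (-(1/2 : ℝ)))) := by
  have hM0 : 0 ≤ M := le_trans (norm_nonneg _) (hM 0)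
  refine ⟨3 * M + 1, by linarith, ?_⟩
  intro N hN
  have hNpos : (0:ℝ) < N := by exact_mod_cast hN
  have hN1 : (1:ℝ) ≤ N := by exact_mod_cast hN
  set δ := (N:ℝ) ^ (-(1/2 : ℝ)) with hδ
  have hδpos : 0 < δ := Real.rpow_pos_of_pos hNpos _
  have hinv : ((N:ℝ)+1)⁻¹ ≤ δ := by
    have h1 : ((N:ℝ)+1)⁻¹ ≤ (N:ℝ)⁻¹ := by
      apply inv_anti₀ hNpos; linarith
    have h2 : (N:ℝ)⁻¹ = (N:ℝ) ^ (-(1:ℝ)) := (Real.rpow_neg_one _).symm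
    have h3 : (N:ℝ) ^ (-(1:ℝ)) ≤ (N:ℝ) ^ (-(1/2:ℝ)) :=
      Real.rpow_le_rpow_of_exponent_le hN1 (by norm_num)
    rw [h2] at h1; exact h1.trans h3
  -- bound the sum
  have hA : ‖((N : ℝ) + 1)⁻¹ •
      (∑ j ∈ Finset.range (N + 1), bern N 0 ((j : ℝ) / (N : ℝ)) •
        G (bapprox N x ((j : ℝ) / (N : ℝ)), bapprox N u ((j : ℝ) / (N : ℝ))))‖
      ≤ 2 * M * ((N:ℝ)+1)⁻¹ := by
    rw [norm_smul, Real.norm_eq_abs, abs_of_nonneg (by positivity)]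
    have hsum : ‖∑ j ∈ Finset.range (N + 1), bern N 0 ((j : ℝ) / (N : ℝ)) •
        G (bapprox N x ((j : ℝ) / (N : ℝ)), bapprox N u ((j : ℝ) / (N : ℝ)))‖ ≤ 2 * M := by
      calc ‖∑ j ∈ Finset.range (N + 1), bern N 0 ((j : ℝ) / (N : ℝ)) •
            G (bapprox N x ((j : ℝ) / (N : ℝ)), bapprox N u ((j : ℝ) / (N : ℝ)))‖
          ≤ ∑ j ∈ Finset.range (N + 1), ‖bern N 0 ((j : ℝ) / (N : ℝ)) •
            G (bapprox N x ((j : ℝ) / (N : ℝ)), bapprox N u ((j : ℝ) / (N : ℝ)))‖ :=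
            norm_sum_le _ _
        _ ≤ ∑ j ∈ Finset.range (N + 1), bern N 0 ((j : ℝ) / (N : ℝ)) * M := by
            apply Finset.sum_le_sum
            intro j hj
            have hjle : j ≤ N := Nat.lt_succ_iff.mp (Finset.mem_range.mp hj)
            have hb := bern_nonneg_node N j hN hjle
            rw [norm_smul, Real.norm_eq_abs, abs_of_nonneg hb]
            exact mul_le_mul_of_nonneg_left (hM _) hb
        _ = (∑ j ∈ Finset.range (N + 1), bern N 0 ((j : ℝ) / (N : ℝ))) * M := by
            rw [Finset.sum_mul]
        _ ≤ 2 * M := mul_le_mul_of_nonneg_right (bern_sum_le N hN) hM0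
    calc ((N:ℝ)+1)⁻¹ * ‖∑ j ∈ Finset.range (N + 1), bern N 0 ((j : ℝ) / (N : ℝ)) •
          G (bapprox N x ((j : ℝ) / (N : ℝ)), bapprox N u ((j : ℝ) / (N : ℝ)))‖
        ≤ ((N:ℝ)+1)⁻¹ * (2 * M) :=
          mul_le_mul_of_nonneg_left hsum (by positivity)
      _ = 2 * M * ((N:ℝ)+1)⁻¹ := by ring
  -- bound the integral
  have hB : ‖∫ t in (0:ℝ)..1, bern N 0 t • G (x t, u t)‖ ≤ M * ((N:ℝ)+1)⁻¹ := by
    have hbound : IntervalIntegrable (fun t : ℝ => M * (1 - t)^N)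
        MeasureTheory.volume 0 1 := by
      apply Continuous.intervalIntegrable
      continuity
    have h := intervalIntegral.norm_integral_le_abs_of_norm_le
      (f := fun t : ℝ => bern N 0 t • G (x t, u t))
      (g := fun t : ℝ => M * (1 - t)^N) (μ := MeasureTheory.volume) (a := 0) (b := 1)
      ?_ hbound
    · have hval : ∫ t in (0:ℝ)..1, M * (1 - t)^N = M * ((N:ℝ)+1)⁻¹ := by
        rw [intervalIntegral.integral_const_mul, integral_one_sub_pow]
        ring
      rw [hval] at h
      rwa [abs_of_nonneg (by positivity)] at h
    · filter_upwards [MeasureTheory.ae_restrict_mem measurableSet_uIoc] with t ht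
      rw [Set.uIoc_of_le (by norm_num : (0:ℝ) ≤ 1)] at ht
      have ht0 : 0 ≤ 1 - t := by linarith [ht.2]
      rw [bern_zero, norm_smul, Real.norm_eq_abs, abs_of_nonneg (by positivity)]
      calc (1-t)^N * ‖G (x t, u t)‖ ≤ (1-t)^N * M :=
            mul_le_mul_of_nonneg_left (hM _) (by positivity)
        _ = M * (1-t)^N := by ring
  calc ‖((N : ℝ) + 1)⁻¹ •
          (∑ j ∈ Finset.range (N + 1), bern N 0 ((j : ℝ) / (N : ℝ)) •
            G (bapprox N x ((j : ℝ) / (N : ℝ)), bapprox N u ((j : ℝ) / (N : ℝ))))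
        - ∫ t in (0:ℝ)..1, bern N 0 t • G (x t, u t)‖
      ≤ 2 * M * ((N:ℝ)+1)⁻¹ + M * ((N:ℝ)+1)⁻¹ := (norm_sub_le _ _).trans (add_le_add hA hB)
    _ = 3 * M * ((N:ℝ)+1)⁻¹ := by ring
    _ ≤ (3 * M + 1) * δ := by
        have := mul_le_mul_of_nonneg_left hinv (by linarith : (0:ℝ) ≤ 3*M)
        nlinarith
    _ ≤ (3 * M + 1) * (δ + modCont x δ + modCont u δ) := by
        have h1 := modCont_nonneg_s16 x δ
        have h2 := modCont_nonneg_s16 u δ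
        nlinarith
end
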